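/- arXiv:2210.10215 — 2 statements merged into one kernel-verified Lean document; each statement's English description precedes it below -/
import Mathlib

section
/- Let f_e(t,q) := Σ_{x ∈ ℕ^e} t^{n_e(x)} q^{W_e(x)} ∈ ℤ[[t,q]] for e ≥ 1. Then for every d ≥ 2, the recurrence f_d(t,q) = (1 − t)^{−1} · f_{d−1}(tq, q) holds in ℤ[[t,q]], where f_{d−1}(tq,q) denotes the power series obtained from f_{d−1}(t,q) by substituting t ↦ tq. -/
namespace Spiral

/-- The size `n(x) = n₁ + ⋯ + n_d` of a configuration `x ∈ ℕ^d`. -/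
def size {d : ℕ} (x : Fin d → ℕ) : ℕ := ∑ i, x i

/-- The weight `W(x) = Σ_{i<j} (max(0, x_j − x_i) + max(0, x_i − x_j − 1))`
(truncated ℕ-subtraction realizes the `max(0,·)`). -/
def weight {d : ℕ} (x : Fin d → ℕ) : ℕ :=
  ∑ i : Fin d, ∑ j : Fin d, if i < j then (x j - x i) + (x i - x j - 1) else 0

end Spiral

namespace Spiral

/-- The generating series `f_e(t,q) = Σ_{x ∈ ℕ^e} t^{n_e(x)} q^{W_e(x)} ∈ ℤ[[t,q]]`
(`t = X 0`, `q = X 1`), defined coefficientwise: the coefficient of `t^n q^W` is the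
(finite) number of `x ∈ ℕ^e` with `size x = n` and `weight x = W`. -/
noncomputable def genSeries (e : ℕ) : MvPowerSeries (Fin 2) ℤ :=
  fun m => (Nat.card {x : Fin e → ℕ // size x = m 0 ∧ weight x = m 1} : ℤ)

/-- The substituted series `f_e(tq, q) = Σ_{x ∈ ℕ^e} t^{n_e(x)} q^{W_e(x)+n_e(x)}`,
defined coefficientwise. -/
noncomputable def genSeriesSubst (e : ℕ) : MvPowerSeries (Fin 2) ℤ :=
  fun m => (Nat.card {x : Fin e → ℕ // size x = m 0 ∧ weight x + size x = m 1} : ℤ)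

end Spiral

namespace Spiral

variable {e : ℕ}

lemma size_cons (a : ℕ) (y : Fin e → ℕ) : size (Fin.cons a y) = a + size y := by
  simp [size, Fin.sum_univ_succ]

lemma size_snoc (y : Fin e → ℕ) (c : ℕ) : size (Fin.snoc y c) = size y + c := by
  simp [size, Fin.sum_univ_castSucc]

lemma weight_cons (a : ℕ) (y : Fin e → ℕ) :
    weight (Fin.cons a y) = (∑ j, ((y j - a) + (a - y j - 1))) + weight y := by
  unfold weight
  rw [Fin.sum_univ_succ]
  congr 1
  · rw [Fin.sum_univ_succ]
    simp [Fin.succ_pos]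
  · refine Finset.sum_congr rfl fun i _ => ?_
    rw [Fin.sum_univ_succ]
    simp [Fin.succ_lt_succ_iff]

lemma weight_snoc (y : Fin e → ℕ) (c : ℕ) :
    weight (Fin.snoc y c) = weight y + ∑ i, ((c - y i) + (y i - c - 1)) := by
  unfold weight
  rw [Fin.sum_univ_castSucc]
  have hlast : ∀ j : Fin (e + 1), ¬ (Fin.last e < j) := fun j => Fin.not_lt.mpr (Fin.le_last j)
  rw [Finset.sum_eq_zero (fun j _ => if_neg (hlast j)), add_zero]
  rw [← Finset.sum_add_distrib]
  refine Finset.sum_congr rfl fun i _ => ?_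
  rw [Fin.sum_univ_castSucc]
  simp [Fin.castSucc_lt_castSucc_iff, Fin.castSucc_lt_last]

lemma size_cons_zero (y : Fin e → ℕ) : size (Fin.cons 0 y : Fin (e + 1) → ℕ) = size y := by
  simp [size_cons]

lemma weight_cons_zero (y : Fin e → ℕ) :
    weight (Fin.cons 0 y : Fin (e + 1) → ℕ) = weight y + size y := by
  rw [weight_cons, add_comm]
  congr 1
  simp only [size]
  exact Finset.sum_congr rfl fun j _ => by omega

lemma finite_subtype (k n : ℕ) (p : (Fin k → ℕ) → Prop) :
    Finite {x : Fin k → ℕ // size x = n ∧ p x} := by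
  have hb : ∀ (x : {x : Fin k → ℕ // size x = n ∧ p x}) (i : Fin k), x.1 i < n + 1 := by
    intro x i
    have h1 : x.1 i ≤ ∑ j, x.1 j :=
      Finset.single_le_sum (fun j _ => Nat.zero_le (x.1 j)) (Finset.mem_univ i)
    have h2 : size x.1 = n := x.2.1
    simp only [size] at h2
    omega
  apply Finite.of_injective (fun x => (fun i => (⟨x.1 i, hb x i⟩ : Fin (n + 1))))
  intro x y hxy
  apply Subtype.ext
  funext i
  exact congrArg Fin.val (congrFun hxy i)

/-- The equiv realizing `f_{e+1}(t,q) = t f_{e+1}(t,q) + f_e(tq,q)` coefficientwise for `n ≥ 1`. -/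
noncomputable def mainEquiv (n W : ℕ) (hn : 1 ≤ n) :
    {x : Fin (e + 1) → ℕ // size x = n ∧ weight x = W} ≃
      ({z : Fin (e + 1) → ℕ // size z = n - 1 ∧ weight z = W} ⊕
        {y : Fin e → ℕ // size y = n ∧ weight y + size y = W}) where
  toFun x :=
    if h : x.1 0 = 0 then
      Sum.inr ⟨Fin.tail x.1, by
        obtain ⟨hs, hw⟩ := x.2
        have hx := Fin.cons_self_tail x.1
        rw [h] at hx
        rw [← hx, size_cons_zero] at hs
        rw [← hx, weight_cons_zero] at hw
        exact ⟨hs, hw⟩⟩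
    else
      Sum.inl ⟨Fin.snoc (Fin.tail x.1) (x.1 0 - 1), by
        obtain ⟨hs, hw⟩ := x.2
        have hx : x.1 = Fin.cons (x.1 0) (Fin.tail x.1) := (Fin.cons_self_tail x.1).symm
        rw [hx, size_cons] at hs
        rw [hx, weight_cons] at hw
        have hsum : (∑ i, ((x.1 0 - 1) - Fin.tail x.1 i + (Fin.tail x.1 i - (x.1 0 - 1) - 1)))
            = ∑ j, ((Fin.tail x.1 j - x.1 0) + (x.1 0 - Fin.tail x.1 j - 1)) :=
          Finset.sum_congr rfl fun i _ => by omega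
        constructor
        · rw [size_snoc]; omega
        · rw [weight_snoc, hsum]; omega⟩
  invFun s :=
    s.elim
      (fun z => ⟨Fin.cons (z.1 (Fin.last e) + 1) (Fin.init z.1), by
        obtain ⟨hs, hw⟩ := z.2
        have hz : z.1 = Fin.snoc (Fin.init z.1) (z.1 (Fin.last e)) := (Fin.snoc_init_self z.1).symm
        rw [hz, size_snoc] at hs
        rw [hz, weight_snoc] at hw
        have hsum : (∑ j, ((Fin.init z.1 j - (z.1 (Fin.last e) + 1))
              + ((z.1 (Fin.last e) + 1) - Fin.init z.1 j - 1)))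
            = ∑ i, ((z.1 (Fin.last e) - Fin.init z.1 i) + (Fin.init z.1 i - z.1 (Fin.last e) - 1)) :=
          Finset.sum_congr rfl fun i _ => by omega
        constructor
        · rw [size_cons]; omega
        · rw [weight_cons, hsum]; omega⟩)
      (fun y => ⟨Fin.cons 0 y.1, by
        obtain ⟨hs, hw⟩ := y.2
        rw [size_cons_zero, weight_cons_zero]
        exact ⟨hs, hw⟩⟩)
  left_inv x := by
    by_cases h : x.1 0 = 0
    · simp only [dif_pos h, Sum.elim_inr]
      apply Subtype.ext
      have hx := Fin.cons_self_tail x.1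
      rw [h] at hx
      exact hx
    · simp only [dif_neg h, Sum.elim_inl]
      apply Subtype.ext
      simp only [Fin.snoc_last, Fin.init_snoc]
      have : x.1 0 - 1 + 1 = x.1 0 := by omega
      rw [this]
      exact Fin.cons_self_tail x.1
  right_inv s := by
    rcases s with z | y
    · simp only [Sum.elim_inl]
      have h0 : (Fin.cons (z.1 (Fin.last e) + 1) (Fin.init z.1) : Fin (e + 1) → ℕ) 0 ≠ 0 := by
        simp
      refine (dif_neg h0).trans ?_
      congr 1
      apply Subtype.ext
      simp only [Fin.cons_zero, Fin.tail_cons, Nat.add_sub_cancel]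
      exact Fin.snoc_init_self z.1
    · simp only [Sum.elim_inr]
      have h0 : (Fin.cons 0 y.1 : Fin (e + 1) → ℕ) 0 = 0 := rfl
      refine (dif_pos h0).trans ?_
      congr 1

/-- The `n = 0` case. -/
noncomputable def zeroEquiv (W : ℕ) :
    {x : Fin (e + 1) → ℕ // size x = 0 ∧ weight x = W} ≃
      {y : Fin e → ℕ // size y = 0 ∧ weight y + size y = W} where
  toFun x := ⟨Fin.tail x.1, by
    obtain ⟨hs, hw⟩ := x.2
    have h0 : x.1 0 = 0 := by
      have h1 : x.1 0 ≤ ∑ j, x.1 j :=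
        Finset.single_le_sum (fun j _ => Nat.zero_le (x.1 j)) (Finset.mem_univ 0)
      simp only [size] at hs
      omega
    have hx := Fin.cons_self_tail x.1
    rw [h0] at hx
    rw [← hx, size_cons_zero] at hs
    rw [← hx, weight_cons_zero] at hw
    exact ⟨hs, hw⟩⟩
  invFun y := ⟨Fin.cons 0 y.1, by
    obtain ⟨hs, hw⟩ := y.2
    rw [size_cons_zero, weight_cons_zero]
    exact ⟨hs, hw⟩⟩
  left_inv x := by
    apply Subtype.ext
    have h0 : x.1 0 = 0 := by
      obtain ⟨hs, -⟩ := x.2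
      have h1 : x.1 0 ≤ ∑ j, x.1 j :=
        Finset.single_le_sum (fun j _ => Nat.zero_le (x.1 j)) (Finset.mem_univ 0)
      simp only [size] at hs
      omega
    have hx := Fin.cons_self_tail x.1
    rw [h0] at hx
    exact hx
  right_inv y := rfl

lemma coeff_genSeries (k : ℕ) (km : Fin 2 →₀ ℕ) :
    MvPowerSeries.coeff km (genSeries k)
      = (Nat.card {x : Fin k → ℕ // size x = km 0 ∧ weight x = km 1} : ℤ) := rfl

lemma coeff_genSeriesSubst (k : ℕ) (km : Fin 2 →₀ ℕ) :
    MvPowerSeries.coeff km (genSeriesSubst k)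
      = (Nat.card {x : Fin k → ℕ // size x = km 0 ∧ weight x + size x = km 1} : ℤ) := rfl

lemma key_card (n W : ℕ) (hn : 1 ≤ n) :
    Nat.card {x : Fin (e + 1) → ℕ // size x = n ∧ weight x = W}
      = Nat.card {z : Fin (e + 1) → ℕ // size z = n - 1 ∧ weight z = W}
        + Nat.card {y : Fin e → ℕ // size y = n ∧ weight y + size y = W} := by
  have := finite_subtype (e + 1) (n - 1) (fun z => weight z = W)
  have := finite_subtype e n (fun y => weight y + size y = W)
  rw [Nat.card_congr (mainEquiv n W hn), Nat.card_sum]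

end Spiral

open Spiral in
/-- With `f_e(t,q) := Σ_{x ∈ ℕ^e} t^{n_e(x)} q^{W_e(x)} ∈ ℤ[[t,q]]`, for
every `d ≥ 2` the recurrence `f_d(t,q) = (1 − t)⁻¹ · f_{d−1}(tq, q)` holds in `ℤ[[t,q]]`.
It is stated multiplicatively (`1 − t` is a unit): `(1 − t) · f_d(t,q) = f_{d−1}(tq, q)`. -/
theorem statement15 (d : ℕ) (hd : 2 ≤ d) :
    (1 - MvPowerSeries.X 0 : MvPowerSeries (Fin 2) ℤ) * genSeries d =
      genSeriesSubst (d - 1) := by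
  obtain ⟨e, rfl⟩ : ∃ e, d = e + 1 := ⟨d - 1, by omega⟩
  have hde : e + 1 - 1 = e := rfl
  rw [hde]
  ext m
  rw [sub_mul, one_mul, map_sub]
  have hX : (MvPowerSeries.coeff m) (MvPowerSeries.X 0 * genSeries (e + 1))
      = if Finsupp.single (0 : Fin 2) 1 ≤ m
          then (MvPowerSeries.coeff (m - Finsupp.single 0 1)) (genSeries (e + 1)) else 0 := by
    rw [MvPowerSeries.X_def, MvPowerSeries.coeff_monomial_mul]
    simp
  rw [hX]
  have hcoeff : ∀ (k e : ℕ) (km : Fin 2 →₀ ℕ), True := fun _ _ _ => trivial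
  by_cases hm : (1 : ℕ) ≤ m 0
  · rw [if_pos (Finsupp.single_le_iff.mpr hm)]
    have h0 : (m - Finsupp.single 0 1 : Fin 2 →₀ ℕ) 0 = m 0 - 1 := by
      rw [Finsupp.tsub_apply, Finsupp.single_eq_same]
    have h1 : (m - Finsupp.single 0 1 : Fin 2 →₀ ℕ) 1 = m 1 := by
      rw [Finsupp.tsub_apply, Finsupp.single_eq_of_ne (by decide)]
      omega
    rw [coeff_genSeries, coeff_genSeries, coeff_genSeriesSubst, h0, h1]
    have := key_card (e := e) (m 0) (m 1) hm
    push_cast [this]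
    ring
  · have hns : ¬ Finsupp.single (0 : Fin 2) 1 ≤ m := fun h => hm (Finsupp.single_le_iff.mp h)
    rw [if_neg hns, sub_zero, coeff_genSeries, coeff_genSeriesSubst]
    have hm0 : m 0 = 0 := by omega
    rw [hm0]
    norm_cast
    exact Nat.card_congr (zeroEquiv (e := e) (m 1))
end

section
/- For every x = (n_1,…,n_d) ∈ ℕ^d, the set Hilb(x) of F_q[[T]]-submodules M of F = F_q[[T]]^d with dim_{F_q}(F/M) finite and LT(M) equal to the submodule generated by T^{n_1}u_1,…,T^{n_d}u_d is finite of cardinality q^{W(x)}, where W(x) = Σ_{i≠j∈[d]} max(0, ⌊n_j + j/d − n_i − i/d⌋) = Σ_{1≤i<j≤d} ( max(0, n_j − n_i) + max(0, n_i − n_j − 1) ). -/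
namespace Spiral

/-- Monomials `T^n u_i` of `F = F_q[[T]]^d` (seat `i` 0-indexed) are encoded by the
natural number `n*d + i`; the usual order on encodings is exactly the hlex order
`T^a u_i ≺ T^b u_j ↔ a < b ∨ (a = b ∧ i < j)`. `leadPos f` is the encoding of the
`≺`-least monomial appearing in `f` with nonzero coefficient (for `f ≠ 0`). -/
noncomputable def leadPos (d : ℕ) [NeZero d] {Fq : Type*} [Field Fq]
    (f : Fin d → PowerSeries Fq) : ℕ :=
  sInf {p : ℕ | PowerSeries.coeff (R := Fq) (p / d) (f ⟨p % d, Nat.mod_lt p (NeZero.pos d)⟩) ≠ 0}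

/-- The leading term `LT(f)` of `f ∈ F = F_q[[T]]^d`: the term of `f` supported on its
`≺`-least monomial `T^n u_i` with nonzero coefficient (where `≺` is the hlex order). -/
noncomputable def LTerm (d : ℕ) [NeZero d] {Fq : Type*} [Field Fq]
    (f : Fin d → PowerSeries Fq) : Fin d → PowerSeries Fq :=
  Pi.single ⟨leadPos d f % d, Nat.mod_lt _ (NeZero.pos d)⟩
    (PowerSeries.monomial (R := Fq) (leadPos d f / d)
      (PowerSeries.coeff (R := Fq) (leadPos d f / d)
        (f ⟨leadPos d f % d, Nat.mod_lt _ (NeZero.pos d)⟩)))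

/-- The leading submodule `LT(M)`: the `F_q[[T]]`-submodule of `F` generated by the
leading terms `LT(f)` of the nonzero elements `f ∈ M`. -/
noncomputable def LTsub (d : ℕ) [NeZero d] {Fq : Type*} [Field Fq]
    (M : Submodule (PowerSeries Fq) (Fin d → PowerSeries Fq)) :
    Submodule (PowerSeries Fq) (Fin d → PowerSeries Fq) :=
  Submodule.span (PowerSeries Fq) {g | ∃ f ∈ M, f ≠ 0 ∧ LTerm d f = g}

/-- The standard monomial `T^n u_i ∈ F = F_q[[T]]^d`. -/
noncomputable def stdMono (d : ℕ) {Fq : Type*} [Field Fq] (n : ℕ) (i : Fin d) :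
    Fin d → PowerSeries Fq :=
  Pi.single i ((PowerSeries.monomial (R := Fq) n) 1)

end Spiral

namespace SpiralAux

open Spiral PowerSeries Submodule

set_option linter.unusedSectionVars false
variable {Fq : Type*} [Field Fq] {d : ℕ} [NeZero d]

/-- seat of an encoded position -/
def seatF (d : ℕ) [NeZero d] (p : ℕ) : Fin d := ⟨p % d, Nat.mod_lt p (NeZero.pos d)⟩

/-- encoded coefficient of `f` at position `p` -/
noncomputable def ec (f : Fin d → PowerSeries Fq) (p : ℕ) : Fq :=
  PowerSeries.coeff (R := Fq) (p / d) (f (seatF d p))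

lemma leadPos_eq_sInf (f : Fin d → PowerSeries Fq) :
    leadPos d f = sInf {p | ec f p ≠ 0} := rfl

lemma enc_div {j : ℕ} (m : ℕ) (hj : j < d) : (m * d + j) / d = m := by
  rw [add_comm, Nat.add_mul_div_right _ _ (NeZero.pos d), Nat.div_eq_of_lt hj, zero_add]

lemma enc_mod {j : ℕ} (m : ℕ) (hj : j < d) : (m * d + j) % d = j := by
  rw [add_comm, Nat.add_mul_mod_self_right, Nat.mod_eq_of_lt hj]

lemma seatF_enc (m : ℕ) (j : Fin d) : seatF d (m * d + (j : ℕ)) = j := by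
  apply Fin.ext; simp [seatF, enc_mod m j.isLt]

lemma ec_enc (f : Fin d → PowerSeries Fq) (m : ℕ) (j : Fin d) :
    ec f (m * d + (j : ℕ)) = PowerSeries.coeff (R := Fq) m (f j) := by
  rw [ec, seatF_enc, enc_div m j.isLt]

lemma enc_seat_div (p : ℕ) : (p / d) * d + ((seatF d p : Fin d) : ℕ) = p := by
  simpa [seatF] using Nat.div_add_mod' p d

lemma eq_of_seat_div {p q : ℕ} (h1 : seatF d p = seatF d q) (h2 : p / d = q / d) : p = q := by
  have hp := enc_seat_div (d := d) p
  have hq := enc_seat_div (d := d) q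
  rw [← hp, ← hq, h1, h2]

lemma ec_ext {f g : Fin d → PowerSeries Fq} (h : ∀ p, ec f p = ec g p) : f = g := by
  funext j
  exact PowerSeries.ext fun m => by simpa [ec_enc] using h (m * d + (j : ℕ))

@[simp] lemma ec_zero (p : ℕ) : ec (0 : Fin d → PowerSeries Fq) p = 0 := by simp [ec]

lemma ec_add (f g : Fin d → PowerSeries Fq) (p : ℕ) : ec (f + g) p = ec f p + ec g p := by
  simp [ec]

lemma ec_sub (f g : Fin d → PowerSeries Fq) (p : ℕ) : ec (f - g) p = ec f p - ec g p := by
  simp [ec]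

lemma ec_smulFq (a : Fq) (f : Fin d → PowerSeries Fq) (p : ℕ) :
    ec (a • f) p = a * ec f p := by
  simp [ec]

lemma ec_sum {ι : Type*} (s : Finset ι) (g : ι → Fin d → PowerSeries Fq) (p : ℕ) :
    ec (∑ i ∈ s, g i) p = ∑ i ∈ s, ec (g i) p := by
  classical
  induction s using Finset.induction_on with
  | empty => simp
  | insert a s' h ih => rw [Finset.sum_insert h, Finset.sum_insert h, ec_add, ih]

lemma ne_zero_iff_ec {f : Fin d → PowerSeries Fq} : f ≠ 0 ↔ ∃ p, ec f p ≠ 0 := by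
  constructor
  · intro hf
    by_contra h
    push_neg at h
    exact hf (ec_ext (by simpa using h))
  · rintro ⟨p, hp⟩ rfl
    exact hp (ec_zero p)

lemma sub_enc {s p : ℕ} (h : s ≤ p / d) : p - s * d = (p / d - s) * d + p % d := by
  have h3 : s * d ≤ p / d * d := Nat.mul_le_mul_right d h
  have h2 : p / d * d + p % d = p := Nat.div_add_mod' p d
  rw [Nat.sub_eq_iff_eq_add (by omega), Nat.sub_mul]
  omega

lemma ec_smul (a : PowerSeries Fq) (f : Fin d → PowerSeries Fq) (p : ℕ) :
    ec (a • f) p = ∑ s ∈ Finset.range (p / d + 1),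
      PowerSeries.coeff (R := Fq) s a * ec f (p - s * d) := by
  have : ec (a • f) p = PowerSeries.coeff (R := Fq) (p / d) (a * f (seatF d p)) := rfl
  rw [this, PowerSeries.coeff_mul, Finset.Nat.sum_antidiagonal_eq_sum_range_succ_mk]
  refine Finset.sum_congr rfl fun s hs => ?_
  rw [Finset.mem_range] at hs
  have hs' : s ≤ p / d := by omega
  congr 1
  have hrw : p - s * d = (p / d - s) * d + ((seatF d p : Fin d) : ℕ) := by
    have := sub_enc (d := d) hs'; simpa [seatF] using this
  rw [hrw, ec_enc]

lemma ec_smul_eq_zero {f : Fin d → PowerSeries Fq} {n : ℕ} (hf : ∀ q, q < n → ec f q = 0)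
    {a : PowerSeries Fq} {s₀ : ℕ} (ha : ∀ s, s < s₀ → PowerSeries.coeff (R := Fq) s a = 0)
    {p : ℕ} (hp : p < n + s₀ * d) : ec (a • f) p = 0 := by
  rw [ec_smul]
  refine Finset.sum_eq_zero fun s hs => ?_
  rcases lt_or_ge s s₀ with h | h
  · rw [ha s h, zero_mul]
  · have h3 : s₀ * d ≤ s * d := Nat.mul_le_mul_right d h
    rw [Finset.mem_range] at hs
    have h4 : s * d ≤ p / d * d := Nat.mul_le_mul_right d (by omega)
    have h5 : p / d * d ≤ p := Nat.div_mul_le_self p d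
    rw [hf (p - s * d) (by omega), mul_zero]

lemma ec_smul_apply {f : Fin d → PowerSeries Fq} {n : ℕ} (hf : ∀ q, q < n → ec f q = 0)
    {a : PowerSeries Fq} {s₀ : ℕ} (ha : ∀ s, s < s₀ → PowerSeries.coeff (R := Fq) s a = 0) :
    ec (a • f) (n + s₀ * d) = PowerSeries.coeff (R := Fq) s₀ a * ec f n := by
  rw [ec_smul]
  have hdiv : (n + s₀ * d) / d = n / d + s₀ := Nat.add_mul_div_right n s₀ (NeZero.pos d)
  have hmem : s₀ ∈ Finset.range ((n + s₀ * d) / d + 1) := by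
    rw [Finset.mem_range, hdiv]; exact Nat.lt_succ_of_le (Nat.le_add_left s₀ (n / d))
  rw [Finset.sum_eq_single_of_mem s₀ hmem ?side, Nat.add_sub_cancel]
  case side =>
    intro s hs hne
    rw [Finset.mem_range, hdiv] at hs
    rcases lt_or_ge s s₀ with h | h
    · rw [ha s h, zero_mul]
    · have h1 : (s - s₀) * d ≤ n / d * d := Nat.mul_le_mul_right d (by omega)
      have h2 : n / d * d ≤ n := Nat.div_mul_le_self n d
      have h3 : 0 < (s - s₀) * d := Nat.mul_pos (by omega) (NeZero.pos d)
      have h4 : s * d = s₀ * d + (s - s₀) * d := by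
        rw [← Nat.add_mul]; congr 1; omega
      rw [hf (n + s₀ * d - s * d) (by omega), mul_zero]

lemma leadPos_eq_of {f : Fin d → PowerSeries Fq} {n : ℕ}
    (h0 : ∀ p, p < n → ec f p = 0) (h1 : ec f n ≠ 0) : leadPos d f = n := by
  rw [leadPos_eq_sInf]
  refine le_antisymm (Nat.sInf_le h1) ?_
  by_contra h
  push_neg at h
  exact Nat.sInf_mem (⟨n, h1⟩ : {p | ec f p ≠ 0}.Nonempty) (h0 _ h)

lemma leadPos_spec {f : Fin d → PowerSeries Fq} (hf : f ≠ 0) :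
    ec f (leadPos d f) ≠ 0 ∧ ∀ p, p < leadPos d f → ec f p = 0 := by
  obtain ⟨p, hp⟩ := ne_zero_iff_ec.mp hf
  refine ⟨Nat.sInf_mem (⟨p, hp⟩ : {p | ec f p ≠ 0}.Nonempty), fun q hq => ?_⟩
  by_contra h
  have h2 := Nat.sInf_le (show q ∈ {p | ec f p ≠ 0} from h)
  rw [leadPos_eq_sInf] at hq
  omega

lemma LTerm_def (f : Fin d → PowerSeries Fq) :
    LTerm d f = Pi.single (seatF d (leadPos d f))
      ((PowerSeries.monomial (R := Fq) (leadPos d f / d)) (ec f (leadPos d f))) := rfl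

lemma ec_single (j : Fin d) (g : PowerSeries Fq) (p : ℕ) :
    ec (Pi.single j g) p
      = if seatF d p = j then PowerSeries.coeff (R := Fq) (p / d) g else 0 := by
  rw [ec, Pi.single_apply]
  split <;> simp

lemma ec_LTerm (f : Fin d → PowerSeries Fq) (p : ℕ) :
    ec (LTerm d f) p = if p = leadPos d f then ec f (leadPos d f) else 0 := by
  rw [LTerm_def, ec_single]
  by_cases hp : p = leadPos d f
  · subst hp; simp [PowerSeries.coeff_monomial]
  · rw [if_neg hp]
    split_ifs with h1
    · rw [PowerSeries.coeff_monomial, if_neg]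
      intro h2
      exact hp (eq_of_seat_div h1 h2)
    · rfl

end SpiralAux
namespace SpiralAux

open Spiral PowerSeries Submodule

set_option linter.unusedSectionVars false
variable {Fq : Type*} [Field Fq] {d : ℕ} [NeZero d]

lemma smul_single (r : PowerSeries Fq) (i : Fin d) (g : PowerSeries Fq) :
    r • (Pi.single i g : Fin d → PowerSeries Fq)
      = (Pi.single i (r * g) : Fin d → PowerSeries Fq) := by
  funext j
  by_cases h : j = i
  · subst h; simp
  · simp [Pi.single_eq_of_ne h]

/-- The target leading submodule. -/
noncomputable abbrev B (x : Fin d → ℕ) : Submodule (PowerSeries Fq) (Fin d → PowerSeries Fq) :=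
  Submodule.span (PowerSeries Fq) (Set.range fun i => stdMono d (x i) i)

lemma mem_B_iff (x : Fin d → ℕ) (f : Fin d → PowerSeries Fq) :
    f ∈ B x ↔ ∀ p : ℕ, p / d < x (seatF d p) → ec f p = 0 := by
  rw [B, mem_span_range_iff_exists_fun]
  constructor
  · rintro ⟨cf, rfl⟩ p hp
    rw [ec_sum]
    refine Finset.sum_eq_zero fun i _ => ?_
    rw [stdMono, ← X_pow_eq, smul_single, ec_single]
    split_ifs with h
    · subst h
      rw [PowerSeries.coeff_mul_X_pow', if_neg (by omega)]
    · rfl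
  · intro h
    have hdvd : ∀ i : Fin d, (X : PowerSeries Fq) ^ (x i) ∣ f i := by
      intro i
      rw [PowerSeries.X_pow_dvd_iff]
      intro m hm
      have := h (m * d + (i : ℕ)) (by rw [enc_div m i.isLt, seatF_enc]; exact hm)
      rwa [ec_enc] at this
    choose hq hhq using hdvd
    refine ⟨hq, ?_⟩
    have : ∀ i : Fin d, hq i • stdMono d (x i) i
        = (Pi.single i (f i) : Fin d → PowerSeries Fq) := by
      intro i
      rw [stdMono, ← X_pow_eq, smul_single, mul_comm, ← hhq i]
    rw [funext this, Finset.univ_sum_single]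

section StdSets

variable (x : Fin d → ℕ)

/-- position of the generator `T^(x i) u_i` -/
def encP (i : Fin d) : ℕ := x i * d + (i : ℕ)

lemma seatF_encP (i : Fin d) : seatF d (encP x i) = i := seatF_enc _ _

lemma encP_div (i : Fin d) : encP x i / d = x i := enc_div _ i.isLt

/-- the finite set of standard positions -/
def stdF : Finset ℕ :=
  (Finset.range ((Finset.univ.sup x) * d)).filter (fun p => p / d < x (seatF d p))

lemma mem_stdF {p : ℕ} : p ∈ stdF x ↔ p / d < x (seatF d p) := by
  rw [stdF, Finset.mem_filter, Finset.mem_range]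
  refine ⟨fun h => h.2, fun h => ⟨?_, h⟩⟩
  have hle : x (seatF d p) ≤ Finset.univ.sup x := Finset.le_sup (Finset.mem_univ _)
  rw [← Nat.div_lt_iff_lt_mul (NeZero.pos d)]
  omega

/-- standard positions strictly beyond the generator position `encP x i` -/
def SPF (i : Fin d) : Finset ℕ := (stdF x).filter (fun p => encP x i < p)

lemma mem_SPF {i : Fin d} {p : ℕ} :
    p ∈ SPF x i ↔ (p / d < x (seatF d p) ∧ encP x i < p) := by
  rw [SPF, Finset.mem_filter, mem_stdF]

/-- basis vector at encoded position `p` -/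
noncomputable def bv (p : ℕ) : Fin d → PowerSeries Fq :=
  Pi.single (seatF d p) ((PowerSeries.monomial (R := Fq) (p / d)) 1)

lemma ec_bv (p q : ℕ) : ec (bv p : Fin d → PowerSeries Fq) q = if q = p then 1 else 0 := by
  rw [bv, ec_single]
  by_cases h : q = p
  · subst h; simp [PowerSeries.coeff_monomial]
  · rw [if_neg h]
    split_ifs with h1
    · rw [PowerSeries.coeff_monomial, if_neg (fun h2 => h (eq_of_seat_div h1 h2))]
    · rfl

lemma stdMono_eq_bv (i : Fin d) : stdMono d (x i) i = (bv (encP x i) : Fin d → PowerSeries Fq) := by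
  rw [stdMono, bv, seatF_encP, encP_div]

lemma ec_stdMono (i : Fin d) (q : ℕ) :
    ec (stdMono d (x i) i : Fin d → PowerSeries Fq) q = if q = encP x i then 1 else 0 := by
  rw [stdMono_eq_bv x i, ec_bv]

lemma ec_sum_bv (t : Finset ℕ) (e : ℕ → Fq) (q : ℕ) :
    ec (∑ p ∈ t, e p • (bv p : Fin d → PowerSeries Fq)) q = if q ∈ t then e q else 0 := by
  rw [ec_sum]
  simp only [ec_smulFq, ec_bv, mul_ite, mul_one, mul_zero]
  rw [Finset.sum_ite_eq t q e]

lemma ec_sum_bv_attach (t : Finset ℕ) (e : {p // p ∈ t} → Fq) (q : ℕ) :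
    ec (∑ p ∈ t.attach, e p • (bv (p : ℕ) : Fin d → PowerSeries Fq)) q
      = if h : q ∈ t then e ⟨q, h⟩ else 0 := by
  classical
  have : ∑ p ∈ t.attach, e p • (bv (p : ℕ) : Fin d → PowerSeries Fq)
      = ∑ p ∈ t, (fun p => if h : p ∈ t then e ⟨p, h⟩ else 0) p • (bv p : Fin d → PowerSeries Fq) := by
    rw [← Finset.sum_attach t (fun p => (if h : p ∈ t then e ⟨p, h⟩ else 0) • (bv p : Fin d → PowerSeries Fq))]
    refine Finset.sum_congr rfl fun p _ => ?_
    rw [dif_pos p.2]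
  rw [this, ec_sum_bv]
  by_cases h : q ∈ t <;> simp [h]

/-- reduced generators attached to a coefficient choice `c` -/
noncomputable def gvec (c : ∀ i : Fin d, {p // p ∈ SPF x i} → Fq) (i : Fin d) :
    Fin d → PowerSeries Fq :=
  stdMono d (x i) i + ∑ p ∈ (SPF x i).attach, c i p • (bv (p : ℕ) : Fin d → PowerSeries Fq)

lemma ec_gvec (c : ∀ i : Fin d, {p // p ∈ SPF x i} → Fq) (i : Fin d) (q : ℕ) :
    ec (gvec x c i) q = (if q = encP x i then 1 else 0)
      + (if h : q ∈ SPF x i then c i ⟨q, h⟩ else 0) := by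
  rw [gvec, ec_add, stdMono_eq_bv, ec_bv, ec_sum_bv_attach]

lemma encP_not_std (i : Fin d) : ¬ (encP x i / d < x (seatF d (encP x i))) := by
  rw [encP_div, seatF_encP]; omega

lemma ec_gvec_lt (c : ∀ i : Fin d, {p // p ∈ SPF x i} → Fq) (i : Fin d) {q : ℕ}
    (hq : q < encP x i) : ec (gvec x c i) q = 0 := by
  rw [ec_gvec, if_neg (by omega), dif_neg (fun h => by have := (mem_SPF x).mp h; omega), add_zero]

lemma ec_gvec_self (c : ∀ i : Fin d, {p // p ∈ SPF x i} → Fq) (i : Fin d) :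
    ec (gvec x c i) (encP x i) = 1 := by
  rw [ec_gvec, if_pos rfl, dif_neg (fun h => by have := (mem_SPF x).mp h; omega), add_zero]

lemma gvec_ne_zero (c : ∀ i : Fin d, {p // p ∈ SPF x i} → Fq) (i : Fin d) :
    gvec x c i ≠ 0 :=
  ne_zero_iff_ec.mpr ⟨encP x i, by rw [ec_gvec_self]; exact one_ne_zero⟩

lemma leadPos_gvec (c : ∀ i : Fin d, {p // p ∈ SPF x i} → Fq) (i : Fin d) :
    leadPos d (gvec x c i) = encP x i :=
  leadPos_eq_of (fun p hp => ec_gvec_lt x c i hp)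
    (by rw [ec_gvec_self]; exact one_ne_zero)

lemma LTerm_gvec (c : ∀ i : Fin d, {p // p ∈ SPF x i} → Fq) (i : Fin d) :
    LTerm d (gvec x c i) = stdMono d (x i) i := by
  rw [LTerm_def, leadPos_gvec, seatF_encP, encP_div, ec_gvec_self, stdMono]

end StdSets

end SpiralAux
namespace SpiralAux

open Spiral PowerSeries Submodule

set_option linter.unusedSectionVars false
variable {Fq : Type*} [Field Fq] {d : ℕ} [NeZero d]
variable (x : Fin d → ℕ)

lemma powerSeries_ne_zero_iff {a : PowerSeries Fq} :
    a ≠ 0 ↔ ∃ s, PowerSeries.coeff (R := Fq) s a ≠ 0 := by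
  constructor
  · intro h
    by_contra hc
    push_neg at hc
    exact h (PowerSeries.ext fun n => by simpa using hc n)
  · rintro ⟨s, hs⟩ rfl
    simp at hs

/-- Master no-cancellation lemma: a nontrivial combination of the `gvec`s is nonzero
and has nonstandard lead position. -/
lemma master (c : ∀ i : Fin d, {p // p ∈ SPF x i} → Fq) (a : Fin d → PowerSeries Fq)
    (ha : a ≠ 0) :
    (∑ i, a i • gvec x c i) ≠ 0 ∧
      ¬ (leadPos d (∑ i, a i • gvec x c i) / d
          < x (seatF d (leadPos d (∑ i, a i • gvec x c i)))) := by
  classical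
  set h := ∑ i, a i • gvec x c i with hh
  -- support of a
  set Sn : Finset (Fin d) := Finset.univ.filter (fun i => a i ≠ 0) with hSn
  have hSne : Sn.Nonempty := by
    obtain ⟨i, hi⟩ := Function.ne_iff.mp ha
    exact ⟨i, by
      simp only [hSn, Finset.mem_filter, Finset.mem_univ, true_and]
      simpa using hi⟩
  -- orders
  set o : Fin d → ℕ := fun i => sInf {s | PowerSeries.coeff (R := Fq) s (a i) ≠ 0} with ho
  have ho_spec : ∀ i ∈ Sn, PowerSeries.coeff (R := Fq) (o i) (a i) ≠ 0 ∧
      ∀ s, s < o i → PowerSeries.coeff (R := Fq) s (a i) = 0 := by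
    intro i hi
    rw [hSn, Finset.mem_filter] at hi
    obtain ⟨s, hs⟩ := powerSeries_ne_zero_iff.mp hi.2
    refine ⟨Nat.sInf_mem (⟨s, hs⟩ : {s | PowerSeries.coeff (R := Fq) s (a i) ≠ 0}.Nonempty), ?_⟩
    intro s' hs'
    by_contra hcon
    have h2 := Nat.sInf_le (show s' ∈ {s | PowerSeries.coeff (R := Fq) s (a i) ≠ 0} from hcon)
    have hoi : o i = sInf {s | PowerSeries.coeff (R := Fq) s (a i) ≠ 0} := by rw [ho]
    omega
  set v : Fin d → ℕ := fun i => encP x i + (o i) * d with hv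
  obtain ⟨i0, hi0, hmin⟩ := Finset.exists_min_image Sn v hSne
  -- seat of v i is i
  have hseat : ∀ i : Fin d, v i = (x i + o i) * d + (i : ℕ) := by
    intro i
    rw [hv]; simp only [encP]; ring
  have hvne : ∀ i ∈ Sn, i ≠ i0 → v i0 < v i := by
    intro i hi hne
    have h1 := hmin i hi
    rcases lt_or_eq_of_le h1 with h2 | h2
    · exact h2
    · exfalso
      apply hne
      have e1 : (v i0) % d = (i0 : ℕ) := by rw [hseat i0]; exact enc_mod _ i0.isLt
      have e2 : (v i) % d = (i : ℕ) := by rw [hseat i]; exact enc_mod _ i.isLt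
      exact Fin.ext (by rw [← e1, ← e2, h2])
  -- coefficients below v i0 vanish
  have hbelow : ∀ p, p < v i0 → ec h p = 0 := by
    intro p hp
    rw [hh, ec_sum]
    refine Finset.sum_eq_zero fun i _ => ?_
    by_cases hai : a i = 0
    · rw [hai]; simp
    · have hi : i ∈ Sn := by simp [hSn, hai]
      exact ec_smul_eq_zero (fun q hq => ec_gvec_lt x c i hq) (ho_spec i hi).2
        (lt_of_lt_of_le hp (hmin i hi))
  -- coefficient at v i0
  have hat : ec h (v i0) = PowerSeries.coeff (R := Fq) (o i0) (a i0) := by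
    rw [hh, ec_sum]
    rw [Finset.sum_eq_single_of_mem i0 (Finset.mem_univ i0)]
    · rw [hv]
      rw [ec_smul_apply (fun q hq => ec_gvec_lt x c i0 hq) (ho_spec i0 hi0).2,
        ec_gvec_self, mul_one]
    · intro i _ hne
      by_cases hai : a i = 0
      · rw [hai]; simp
      · have hi : i ∈ Sn := by simp [hSn, hai]
        exact ec_smul_eq_zero (fun q hq => ec_gvec_lt x c i hq) (ho_spec i hi).2
          (hvne i hi hne)
  have hat' : ec h (v i0) ≠ 0 := by rw [hat]; exact (ho_spec i0 hi0).1
  have hne0 : h ≠ 0 := ne_zero_iff_ec.mpr ⟨v i0, hat'⟩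
  have hlead : leadPos d h = v i0 := leadPos_eq_of hbelow hat'
  refine ⟨hne0, ?_⟩
  rw [hlead, hseat i0, enc_div _ i0.isLt, seatF_enc]
  omega

/-- `M c`: the submodule spanned by the reduced generators. -/
noncomputable def Mc (c : ∀ i : Fin d, {p // p ∈ SPF x i} → Fq) :
    Submodule (PowerSeries Fq) (Fin d → PowerSeries Fq) :=
  Submodule.span (PowerSeries Fq) (Set.range (gvec x c))

lemma LTerm_mem_B {f : Fin d → PowerSeries Fq} (hns : ¬ (leadPos d f / d < x (seatF d (leadPos d f)))) :
    LTerm d f ∈ B x := by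
  rw [mem_B_iff]
  intro p hp
  rw [ec_LTerm]
  split_ifs with h
  · exact absurd (h ▸ hp) hns
  · rfl

lemma LTsub_Mc (c : ∀ i : Fin d, {p // p ∈ SPF x i} → Fq) :
    LTsub d (Mc x c) = B x := by
  apply le_antisymm
  · rw [LTsub]
    apply Submodule.span_le.mpr
    rintro g ⟨f, hfM, hf0, rfl⟩
    rw [Mc, mem_span_range_iff_exists_fun] at hfM
    obtain ⟨a, rfl⟩ := hfM
    have ha : a ≠ 0 := by
      rintro rfl
      exact hf0 (by simp)
    exact LTerm_mem_B x (master x c a ha).2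
  · rw [B]
    apply Submodule.span_le.mpr
    rintro g ⟨i, rfl⟩
    apply Submodule.subset_span
    exact ⟨gvec x c i, Submodule.subset_span ⟨i, rfl⟩, gvec_ne_zero x c i,
      LTerm_gvec x c i⟩

/-- supported on standard positions -/
def SSup (f : Fin d → PowerSeries Fq) : Prop :=
  ∀ p : ℕ, ¬ (p / d < x (seatF d p)) → ec f p = 0

lemma eq_zero_of_SSup_mem {M : Submodule (PowerSeries Fq) (Fin d → PowerSeries Fq)}
    (hLT : LTsub d M = B x) {f : Fin d → PowerSeries Fq} (hfM : f ∈ M) (hs : SSup x f) :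
    f = 0 := by
  by_contra hf0
  have hmem : LTerm d f ∈ B x := by
    rw [← hLT, LTsub]
    exact Submodule.subset_span ⟨f, hfM, hf0, rfl⟩
  have hlead := (leadPos_spec hf0).1
  by_cases hstd : leadPos d f / d < x (seatF d (leadPos d f))
  · rw [mem_B_iff] at hmem
    have := hmem (leadPos d f) hstd
    rw [ec_LTerm, if_pos rfl] at this
    exact hlead this
  · exact hlead (hs _ hstd)

lemma Mc_inj {c c' : ∀ i : Fin d, {p // p ∈ SPF x i} → Fq} (h : Mc x c = Mc x c') :
    c = c' := by
  funext i p
  have hdiff : gvec x c i - gvec x c' i ∈ Mc x c := by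
    apply Submodule.sub_mem
    · exact Submodule.subset_span ⟨i, rfl⟩
    · rw [h]; exact Submodule.subset_span ⟨i, rfl⟩
  have heq : gvec x c i - gvec x c' i
      = ∑ p ∈ (SPF x i).attach, (c i p - c' i p) • (bv (p : ℕ) : Fin d → PowerSeries Fq) := by
    rw [gvec, gvec, add_sub_add_left_eq_sub, ← Finset.sum_sub_distrib]
    exact Finset.sum_congr rfl fun p _ => (sub_smul _ _ _).symm
  have hss : SSup x (gvec x c i - gvec x c' i) := by
    intro q hq
    rw [heq, ec_sum_bv_attach]
    rw [dif_neg]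
    intro hmem
    exact hq ((mem_SPF x).mp hmem).1
  have hz := eq_zero_of_SSup_mem x (LTsub_Mc x c) hdiff hss
  have h2 : ec (∑ p ∈ (SPF x i).attach,
      (c i p - c' i p) • (bv (p : ℕ) : Fin d → PowerSeries Fq)) (p : ℕ) = 0 := by
    rw [← heq, hz, ec_zero]
  rw [ec_sum_bv_attach, dif_pos p.2] at h2
  have hsub := sub_eq_zero.mp h2
  simpa using hsub

end SpiralAux
namespace SpiralAux

open Spiral PowerSeries Submodule

set_option linter.unusedSectionVars false
set_option maxHeartbeats 800000
variable {Fq : Type*} [Field Fq] {d : ℕ} [NeZero d]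
variable (x : Fin d → ℕ)

/-- There is a nonzero power series `r` whose multiples all land in `Mc x c`. -/
lemma exists_kill (c : ∀ i : Fin d, {p // p ∈ SPF x i} → Fq) :
    ∃ k : ℕ, ∀ f : Fin d → PowerSeries Fq, ((X : PowerSeries Fq) ^ k) • f ∈ Mc x c := by
  classical
  set A : Matrix (Fin d) (Fin d) (PowerSeries Fq) := Matrix.of (fun j i => gvec x c i j) with hA
  have hmv : ∀ w : Fin d → PowerSeries Fq, A.mulVec w = ∑ i, w i • gvec x c i := by
    intro w
    funext j
    rw [Matrix.mulVec, dotProduct, Finset.sum_apply]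
    refine Finset.sum_congr rfl fun i _ => ?_
    simp [hA, mul_comm]
  have hAmem : ∀ w : Fin d → PowerSeries Fq, A.mulVec w ∈ Mc x c := by
    intro w
    rw [hmv]
    exact Submodule.sum_mem _ fun i _ =>
      Submodule.smul_mem _ _ (Submodule.subset_span ⟨i, rfl⟩)
  have hdet : A.det ≠ 0 := by
    intro h
    obtain ⟨v, hv0, hv⟩ := Matrix.exists_mulVec_eq_zero_iff.mpr h
    exact (master x c v hv0).1 (by rw [← hmv]; exact hv)
  have hr : ∀ f : Fin d → PowerSeries Fq, A.det • f ∈ Mc x c := by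
    intro f
    have h1 : A.det • f = A.mulVec ((Matrix.adjugate A).mulVec f) := by
      rw [Matrix.mulVec_mulVec, Matrix.mul_adjugate, Matrix.smul_mulVec,
        Matrix.one_mulVec]
    rw [h1]
    exact hAmem _
  -- write det = X^k * unit
  set r := A.det with hrdef
  obtain ⟨s0, hs0⟩ := powerSeries_ne_zero_iff.mp hdet
  set k := sInf {s | PowerSeries.coeff (R := Fq) s r ≠ 0} with hk
  have hk_mem : PowerSeries.coeff (R := Fq) k r ≠ 0 :=
    Nat.sInf_mem (⟨s0, hs0⟩ : {s | PowerSeries.coeff (R := Fq) s r ≠ 0}.Nonempty)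
  have hk_lt : ∀ s, s < k → PowerSeries.coeff (R := Fq) s r = 0 := by
    intro s hs
    by_contra hcon
    have := Nat.sInf_le (show s ∈ {s | PowerSeries.coeff (R := Fq) s r ≠ 0} from hcon)
    omega
  obtain ⟨u, hu⟩ : (X : PowerSeries Fq) ^ k ∣ r := PowerSeries.X_pow_dvd_iff.mpr hk_lt
  have hu_unit : IsUnit u := by
    rw [PowerSeries.isUnit_iff_constantCoeff]
    have : PowerSeries.coeff (R := Fq) k r = PowerSeries.constantCoeff (R := Fq) u := by
      rw [hu]
      have := PowerSeries.coeff_X_pow_mul u k 0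
      rw [zero_add] at this
      rw [this, PowerSeries.coeff_zero_eq_constantCoeff]
    rw [← this]
    exact isUnit_iff_ne_zero.mpr hk_mem
  obtain ⟨uu, huu⟩ := hu_unit
  refine ⟨k, fun f => ?_⟩
  have hXk : (X : PowerSeries Fq) ^ k = (uu⁻¹ : (PowerSeries Fq)ˣ) • (r : PowerSeries Fq) := by
    rw [Units.smul_def, smul_eq_mul, hu, ← huu, mul_comm ((X : PowerSeries Fq)^k) _, ← mul_assoc]
    rw [Units.inv_mul, one_mul]
  rw [hXk, Units.smul_def, smul_eq_mul, mul_smul]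
  exact Submodule.smul_mem _ _ (hr f)

/-- The quotient by `Mc x c` is finite dimensional over `Fq`. -/
lemma finQuot (c : ∀ i : Fin d, {p // p ∈ SPF x i} → Fq) :
    Module.Finite Fq ((Fin d → PowerSeries Fq) ⧸ Mc x c) := by
  classical
  obtain ⟨k, hk⟩ := exists_kill x c
  set Q := (Fin d → PowerSeries Fq) ⧸ Mc x c with hQ
  have hfinR : Module.Finite (PowerSeries Fq) Q :=
    Module.Finite.of_surjective (Mc x c).mkQ (Submodule.mkQ_surjective _)
  obtain ⟨s, hs⟩ := Module.finite_def.mp hfinR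
  set κ := k + 1 with hκ
  have hkillQ : ∀ qq : Q, ((X : PowerSeries Fq) ^ κ) • qq = 0 := by
    intro qq
    obtain ⟨f, rfl⟩ := Submodule.mkQ_surjective (Mc x c) qq
    have h1 : ((X : PowerSeries Fq) ^ κ) • (Mc x c).mkQ f
        = (Mc x c).mkQ (((X : PowerSeries Fq) ^ κ) • f) := rfl
    rw [h1]
    rw [Submodule.mkQ_apply, Submodule.Quotient.mk_eq_zero]
    have : ((X : PowerSeries Fq) ^ κ) • f = (X : PowerSeries Fq) • (((X : PowerSeries Fq) ^ k) • f) := by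
      rw [← mul_smul, ← pow_succ']
    rw [this]
    exact Submodule.smul_mem _ _ (hk f)
  set gens : Finset Q := (Finset.range κ ×ˢ s).image
    (fun jv => ((X : PowerSeries Fq) ^ jv.1) • jv.2) with hgens
  set W : Submodule Fq Q := Submodule.span Fq (gens : Set Q) with hW
  have hCsmul : ∀ (a : Fq) (w : Q), (PowerSeries.C (R := Fq) a) • w = a • w := by
    intro a w
    rw [PowerSeries.C_eq_algebraMap, algebraMap_smul]
  have hXW : ∀ w ∈ W, (X : PowerSeries Fq) • w ∈ W := by
    intro w hw
    induction hw using Submodule.span_induction with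
    | mem y hy =>
      rw [hgens] at hy
      simp only [Finset.coe_image, Set.mem_image, Finset.mem_coe, Finset.mem_product,
        Finset.mem_range] at hy
      obtain ⟨⟨j, v⟩, ⟨hj, hv⟩, rfl⟩ := hy
      have : (X : PowerSeries Fq) • ((X : PowerSeries Fq) ^ j) • v
          = ((X : PowerSeries Fq) ^ (j+1)) • v := by
        rw [← mul_smul, ← pow_succ']
      rw [this]
      rcases lt_or_eq_of_le (Nat.succ_le_of_lt hj) with h | h
      · apply Submodule.subset_span
        rw [hgens]
        simp only [Finset.coe_image, Set.mem_image, Finset.mem_coe, Finset.mem_product,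
          Finset.mem_range]
        exact ⟨(j+1, v), ⟨h, hv⟩, rfl⟩
      · have h' : j + 1 = κ := h
        rw [h', hkillQ]
        exact Submodule.zero_mem _
    | zero => rw [smul_zero]; exact Submodule.zero_mem _
    | add y z hy hz hy' hz' => rw [smul_add]; exact Submodule.add_mem _ hy' hz'
    | smul a y hy hy' =>
      rw [← hCsmul a y, ← mul_smul, mul_comm, mul_smul, hCsmul]
      exact Submodule.smul_mem _ _ hy'
  have hXjW : ∀ (j : ℕ) (w), w ∈ W → ((X : PowerSeries Fq) ^ j) • w ∈ W := by
    intro j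
    induction j with
    | zero => intro w hw; rw [pow_zero, one_smul]; exact hw
    | succ j ih =>
      intro w hw
      have : ((X : PowerSeries Fq) ^ (j+1)) • w
          = (X : PowerSeries Fq) • (((X : PowerSeries Fq) ^ j) • w) := by
        rw [← mul_smul, ← pow_succ']
      rw [this]
      exact hXW _ (ih w hw)
  have hRW : ∀ (r : PowerSeries Fq) (w), w ∈ W → r • w ∈ W := by
    intro r w hw
    have hdvd : (X : PowerSeries Fq) ^ κ ∣
        (r - ∑ j ∈ Finset.range κ, PowerSeries.C (R := Fq) (PowerSeries.coeff (R := Fq) j r) * (X : PowerSeries Fq) ^ j) := by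
      rw [PowerSeries.X_pow_dvd_iff]
      intro m hm
      rw [map_sub, map_sum]
      have : ∀ j ∈ Finset.range κ,
          PowerSeries.coeff (R := Fq) m (PowerSeries.C (R := Fq) (PowerSeries.coeff (R := Fq) j r) * (X : PowerSeries Fq) ^ j)
            = if m = j then PowerSeries.coeff (R := Fq) j r else 0 := by
        intro j _
        rw [PowerSeries.coeff_C_mul, PowerSeries.coeff_X_pow]
        split_ifs <;> simp
      rw [Finset.sum_congr rfl this, Finset.sum_ite_eq (Finset.range κ) m
        (fun j => PowerSeries.coeff (R := Fq) j r), if_pos (Finset.mem_range.mpr hm), sub_self]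
    obtain ⟨b, hb⟩ := hdvd
    have hrw : r = (∑ j ∈ Finset.range κ, PowerSeries.C (R := Fq) (PowerSeries.coeff (R := Fq) j r) * (X : PowerSeries Fq) ^ j)
        + (X : PowerSeries Fq) ^ κ * b := by
      rw [← hb]; ring
    rw [hrw, add_smul, Finset.sum_smul]
    apply Submodule.add_mem
    · apply Submodule.sum_mem
      intro j _
      rw [mul_smul, hCsmul]
      exact Submodule.smul_mem _ _ (hXjW j w hw)
    · rw [mul_comm, mul_smul, hkillQ, smul_zero]
      exact Submodule.zero_mem _
  have htop : ∀ qq : Q, qq ∈ W := by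
    intro qq
    have hmem : qq ∈ Submodule.span (PowerSeries Fq) (s : Set Q) := by
      rw [hs]; exact Submodule.mem_top
    induction hmem using Submodule.span_induction with
    | mem y hy =>
      apply Submodule.subset_span
      rw [hgens]
      simp only [Finset.coe_image, Set.mem_image, Finset.mem_coe, Finset.mem_product,
        Finset.mem_range]
      exact ⟨(0, y), ⟨by omega, hy⟩, by rw [pow_zero, one_smul]⟩
    | zero => exact Submodule.zero_mem _
    | add y z hy hz hy' hz' => exact Submodule.add_mem _ hy' hz'
    | smul a y hy hy' => exact hRW a y hy'
  rw [Module.finite_def]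
  exact ⟨gens, eq_top_iff.mpr fun qq _ => htop qq⟩

end SpiralAux
namespace SpiralAux

open Spiral PowerSeries Submodule

set_option linter.unusedSectionVars false
set_option maxHeartbeats 800000
variable {Fq : Type*} [Field Fq] {d : ℕ} [NeZero d]

/-- Nakayama: a submodule with finite-dimensional quotient contains `X^N • F`. -/
lemma pow_smul_mem (M : Submodule (PowerSeries Fq) (Fin d → PowerSeries Fq))
    (hM : Module.Finite Fq ((Fin d → PowerSeries Fq) ⧸ M)) :
    ∃ N : ℕ, ∀ f : Fin d → PowerSeries Fq,
      (∀ j : Fin d, (X : PowerSeries Fq) ^ N ∣ f j) → f ∈ M := by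
  classical
  set Q := (Fin d → PowerSeries Fq) ⧸ M with hQ
  haveI : Module.Finite Fq Q := hM
  haveI : FiniteDimensional Fq Q := hM
  set I : Ideal (PowerSeries Fq) := Ideal.span {(X : PowerSeries Fq)} with hI
  set W : ℕ → Submodule (PowerSeries Fq) Q := fun k => (I ^ k) • (⊤ : Submodule (PowerSeries Fq) Q) with hWdef
  have hWsucc : ∀ k, W (k + 1) = I • W k := by
    intro k
    rw [hWdef]
    simp only
    rw [pow_succ', ← smul_eq_mul, Submodule.smul_assoc]
  have hWmono : ∀ k, W (k + 1) ≤ W k := by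
    intro k
    rw [hWsucc k]
    exact Submodule.smul_le_right
  -- the dimensions stabilize
  set rk : ℕ → ℕ := fun k => Module.finrank Fq ((W k).restrictScalars Fq) with hrk
  have hstab : ∃ N, W (N + 1) = W N := by
    by_contra hcon
    push_neg at hcon
    have hdec : ∀ k, rk (k + 1) < rk k := by
      intro k
      have hlt : (W (k+1)).restrictScalars Fq < (W k).restrictScalars Fq := by
        refine lt_of_le_of_ne (fun y hy => hWmono k hy) ?_
        intro h
        exact hcon k (Submodule.restrictScalars_injective Fq _ _ h)
      exact Submodule.finrank_lt_finrank_of_lt hlt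
    have hbound : ∀ k, rk k + k ≤ rk 0 := by
      intro k
      induction k with
      | zero => omega
      | succ k ih => have := hdec k; omega
    have := hbound (rk 0 + 1)
    omega
  obtain ⟨N, hN⟩ := hstab
  -- W N is finitely generated over the power series ring
  have hfg : (W N).FG := by
    have hfgFq : ((W N).restrictScalars Fq).FG :=
      (IsNoetherian.noetherian _)
    obtain ⟨t, ht⟩ := hfgFq
    refine ⟨t, le_antisymm ?_ ?_⟩
    · rw [Submodule.span_le]
      intro y hy
      have : y ∈ Submodule.span Fq (t : Set Q) := Submodule.subset_span hy
      rw [ht] at this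
      exact this
    · intro y hy
      have : y ∈ Submodule.span Fq (t : Set Q) := by rw [ht]; exact hy
      exact Submodule.span_le_restrictScalars Fq _ _ this
  have hjac : I ≤ Ideal.jacobson ⊥ := by
    rw [IsLocalRing.jacobson_eq_maximalIdeal (⊥ : Ideal (PowerSeries Fq)) bot_ne_top]
    rw [hI, Ideal.span_le]
    rintro y rfl
    rw [SetLike.mem_coe, IsLocalRing.mem_maximalIdeal, mem_nonunits_iff]
    intro hu
    have := PowerSeries.isUnit_constantCoeff _ hu
    rw [PowerSeries.constantCoeff_X] at this
    exact not_isUnit_zero this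
  have hWbot : W N = ⊥ :=
    Submodule.eq_bot_of_le_smul_of_le_jacobson_bot I (W N) hfg
      (by rw [← hWsucc N, hN]) hjac
  refine ⟨N, fun f hf => ?_⟩
  choose g hg using hf
  have hfeq : f = ((X : PowerSeries Fq) ^ N) • g := by
    funext j
    rw [Pi.smul_apply, smul_eq_mul, ← hg j]
  have hmem : Submodule.Quotient.mk (p := M) f ∈ W N := by
    rw [hfeq]
    have : (Submodule.Quotient.mk (p := M) (((X : PowerSeries Fq) ^ N) • g))
        = ((X : PowerSeries Fq) ^ N) • (Submodule.Quotient.mk (p := M) g) :=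
      Submodule.Quotient.mk_smul M _ g
    rw [this, hWdef]
    simp only
    rw [hI, Ideal.span_singleton_pow]
    exact Submodule.smul_mem_smul (Ideal.mem_span_singleton_self _) Submodule.mem_top
  rw [hWbot, Submodule.mem_bot] at hmem
  rwa [Submodule.Quotient.mk_eq_zero] at hmem

end SpiralAux
namespace SpiralAux

open Spiral PowerSeries Submodule

set_option linter.unusedSectionVars false
set_option maxHeartbeats 1600000
variable {Fq : Type*} [Field Fq] {d : ℕ} [NeZero d]
variable (x : Fin d → ℕ)

/-- From `LT(M) = B x` one can extract elements of `M` with lead position any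
prescribed nonstandard position. -/
lemma extraction {M : Submodule (PowerSeries Fq) (Fin d → PowerSeries Fq)}
    (hLT : LTsub d M = B x) :
    ∀ p : ℕ, x (seatF d p) ≤ p / d →
      ∃ h ∈ M, (∀ q, q < p → ec h q = 0) ∧ ec h p ≠ 0 := by
  classical
  -- step 1: at the generator positions
  have h1 : ∀ i : Fin d, ∃ h ∈ M, (∀ q, q < encP x i → ec h q = 0) ∧ ec h (encP x i) ≠ 0 := by
    intro i
    have hmem : stdMono d (x i) i ∈ LTsub d M := by
      rw [hLT]
      exact Submodule.subset_span ⟨i, rfl⟩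
    rw [LTsub, Submodule.mem_span_set'] at hmem
    obtain ⟨n, a, w, hsum⟩ := hmem
    have hne : ec (stdMono d (x i) i : Fin d → PowerSeries Fq) (encP x i) ≠ 0 := by
      rw [stdMono_eq_bv x i, ec_bv, if_pos rfl]
      exact one_ne_zero
    rw [← hsum, ec_sum] at hne
    obtain ⟨kk, _, hkk⟩ := Finset.exists_ne_zero_of_sum_ne_zero hne
    obtain ⟨fk, hfkM, hfk0, hfkL⟩ := (w kk).2
    -- analyze the nonzero coefficient of a kk • LTerm fk at encP x i
    rw [ec_smul] at hkk
    obtain ⟨s, hsmem, hs⟩ := Finset.exists_ne_zero_of_sum_ne_zero hkk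
    rw [Finset.mem_range] at hsmem
    have hs' : s ≤ encP x i / d := by omega
    have hterm : ec ((w kk : Fin d → PowerSeries Fq)) (encP x i - s * d) ≠ 0 :=
      fun h0 => hs (by rw [h0, mul_zero])
    rw [← hfkL, ec_LTerm] at hterm
    have hpos : encP x i - s * d = leadPos d fk := by
      by_contra hc
      rw [if_neg hc] at hterm
      exact hterm rfl
    have hval : ec fk (leadPos d fk) ≠ 0 := by
      rw [← hpos]
      rw [hpos, if_pos rfl] at hterm
      rw [hpos]
      exact hterm
    -- h := X^s • fk
    refine ⟨(X : PowerSeries Fq) ^ s • fk, Submodule.smul_mem _ _ hfkM, ?_, ?_⟩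
    · intro q hq
      apply ec_smul_eq_zero (n := leadPos d fk) (s₀ := s)
        (fun q' hq' => (leadPos_spec hfk0).2 q' hq')
        (fun s' hs' => by rw [PowerSeries.coeff_X_pow, if_neg (by omega)])
      have hsd : s * d ≤ encP x i := by
        have h4 : s * d ≤ encP x i / d * d := Nat.mul_le_mul_right d hs'
        have h5 : encP x i / d * d ≤ encP x i := Nat.div_mul_le_self _ d
        omega
      omega
    · have heq : encP x i = leadPos d fk + s * d := by
        have hsd : s * d ≤ encP x i := by
          have h4 : s * d ≤ encP x i / d * d := Nat.mul_le_mul_right d hs'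
          have h5 : encP x i / d * d ≤ encP x i := Nat.div_mul_le_self _ d
          omega
        omega
      rw [heq, ec_smul_apply (fun q' hq' => (leadPos_spec hfk0).2 q' hq')
        (fun s' hs' => by rw [PowerSeries.coeff_X_pow, if_neg (by omega)])]
      rw [PowerSeries.coeff_X_pow, if_pos rfl, one_mul]
      exact hval
  -- step 2: shift to arbitrary nonstandard position
  intro p hp
  obtain ⟨h, hhM, hh0, hhne⟩ := h1 (seatF d p)
  have hsplit : p = encP x (seatF d p) + (p / d - x (seatF d p)) * d := by
    have h2 : encP x (seatF d p) = x (seatF d p) * d + ((seatF d p : Fin d) : ℕ) := rfl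
    have h3 : (p / d - x (seatF d p)) * d = p / d * d - x (seatF d p) * d := Nat.sub_mul _ _ _
    have h4 : x (seatF d p) * d ≤ p / d * d := Nat.mul_le_mul_right d hp
    have h5 := enc_seat_div (d := d) p
    omega
  refine ⟨(X : PowerSeries Fq) ^ (p / d - x (seatF d p)) • h,
    Submodule.smul_mem _ _ hhM, ?_, ?_⟩
  · intro q hq
    apply ec_smul_eq_zero (n := encP x (seatF d p)) (s₀ := p / d - x (seatF d p)) hh0
      (fun s' hs' => by rw [PowerSeries.coeff_X_pow, if_neg (by omega)])
    omega
  · have hres := ec_smul_apply (a := (X : PowerSeries Fq) ^ (p / d - x (seatF d p)))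
      (s₀ := p / d - x (seatF d p)) hh0
      (fun s' hs' => by rw [PowerSeries.coeff_X_pow, if_neg (by omega)])
    rw [PowerSeries.coeff_X_pow, if_pos rfl, one_mul] at hres
    rw [← hsplit] at hres
    rw [hres]
    exact hhne

/-- Division: every `f` decomposes as a standard-supported part plus an element of `M`. -/
lemma decompose {M : Submodule (PowerSeries Fq) (Fin d → PowerSeries Fq)}
    (hLT : LTsub d M = B x) (hM : Module.Finite Fq ((Fin d → PowerSeries Fq) ⧸ M)) :
    ∀ f : Fin d → PowerSeries Fq, ∃ s, SSup x s ∧ f - s ∈ M := by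
  classical
  obtain ⟨N, hN⟩ := pow_smul_mem M hM
  have hex := extraction x hLT
  have key : ∀ t : ℕ, ∀ f : Fin d → PowerSeries Fq,
      (∀ p, p < N * d - t → ec f p = 0) → ∃ s, SSup x s ∧ f - s ∈ M := by
    intro t
    induction t with
    | zero =>
      intro f hf
      refine ⟨0, fun p _ => ec_zero p, ?_⟩
      rw [sub_zero]
      apply hN
      intro j
      rw [PowerSeries.X_pow_dvd_iff]
      intro m hm
      have hlt : m * d + (j : ℕ) < N * d := by
        have h4 : (m + 1) * d ≤ N * d := Nat.mul_le_mul_right d (by omega)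
        have h5 : (m + 1) * d = m * d + d := by ring
        have := j.isLt
        omega
      have := hf (m * d + (j : ℕ)) (by omega)
      rwa [ec_enc] at this
    | succ t ih =>
      intro f hf
      set k := N * d - (t + 1) with hk
      by_cases h0 : ec f k = 0
      · apply ih f
        intro p hp
        rcases Nat.lt_or_ge p k with h | h
        · exact hf p h
        · have : p = k := by omega
          rw [this]; exact h0
      · by_cases hstd : k / d < x (seatF d k)
        · have harg : ∀ p, p < N * d - t →
              ec (f - ec f k • (bv k : Fin d → PowerSeries Fq)) p = 0 := by
            intro p hp
            rw [ec_sub, ec_smulFq, ec_bv]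
            rcases Nat.lt_or_ge p k with h | h
            · rw [if_neg (by omega), mul_zero, sub_zero]
              exact hf p h
            · have hpk : p = k := by omega
              rw [hpk, if_pos rfl, mul_one, sub_self]
          obtain ⟨s, hs1, hs2⟩ := ih (f - ec f k • (bv k : Fin d → PowerSeries Fq)) harg
          refine ⟨s + ec f k • (bv k : Fin d → PowerSeries Fq), ?_, ?_⟩
          · intro p hps
            rw [ec_add, hs1 p hps, ec_smulFq, ec_bv, if_neg, mul_zero, add_zero]
            rintro rfl
            exact hps hstd
          · have : f - (s + ec f k • (bv k : Fin d → PowerSeries Fq))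
                = (f - ec f k • (bv k : Fin d → PowerSeries Fq)) - s := by ring
            rw [this]
            exact hs2
        · obtain ⟨h, hhM, hh0, hhne⟩ := hex k (le_of_not_gt hstd)
          have harg : ∀ p, p < N * d - t →
              ec (f - (ec f k * (ec h k)⁻¹) • h) p = 0 := by
            intro p hp
            rw [ec_sub, ec_smulFq]
            rcases Nat.lt_or_ge p k with hlt | hge
            · rw [hf p hlt, hh0 p hlt, mul_zero, sub_zero]
            · have hpk : p = k := by omega
              rw [hpk, mul_assoc, inv_mul_cancel₀ hhne, mul_one, sub_self]
          obtain ⟨s, hs1, hs2⟩ := ih (f - (ec f k * (ec h k)⁻¹) • h) harg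
          refine ⟨s, hs1, ?_⟩
          have heq : f - s = (f - (ec f k * (ec h k)⁻¹) • h - s)
              + (ec f k * (ec h k)⁻¹) • h := by ring
          rw [heq]
          exact Submodule.add_mem _ hs2 (Submodule.smul_of_tower_mem _ _ hhM)
  intro f
  exact key (N * d) f (fun p hp => absurd hp (by omega))

end SpiralAux
namespace SpiralAux

open Spiral PowerSeries Submodule

set_option linter.unusedSectionVars false
set_option maxHeartbeats 1600000
variable {Fq : Type*} [Field Fq] {d : ℕ} [NeZero d]
variable (x : Fin d → ℕ)

lemma Mc_surj {M : Submodule (PowerSeries Fq) (Fin d → PowerSeries Fq)}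
    (hM : Module.Finite Fq ((Fin d → PowerSeries Fq) ⧸ M)) (hLT : LTsub d M = B x) :
    ∃ c : ∀ i : Fin d, {p // p ∈ SPF x i} → Fq, Mc x c = M := by
  classical
  choose sf hsf1 hsf2 using decompose x hLT hM
  set g : Fin d → (Fin d → PowerSeries Fq) := fun i => stdMono d (x i) i - sf (stdMono d (x i) i)
    with hg
  have hgM : ∀ i, g i ∈ M := fun i => hsf2 _
  -- support of the tails
  have hsupp : ∀ (i : Fin d) (p : ℕ), ec (sf (stdMono d (x i) i)) p ≠ 0 → p ∈ SPF x i := by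
    intro i p hne
    have hstd : p / d < x (seatF d p) := by
      by_contra hc
      exact hne (hsf1 _ p hc)
    rw [mem_SPF]
    refine ⟨hstd, ?_⟩
    have hpne : p ≠ encP x i := by
      rintro rfl
      exact encP_not_std x i hstd
    rcases Nat.lt_or_ge p (encP x i) with hlt | hge
    · exfalso
      -- leading position of g i would be standard
      have hgne : g i ≠ 0 := by
        apply ne_zero_iff_ec.mpr
        refine ⟨encP x i, ?_⟩
        rw [hg]
        simp only
        rw [ec_sub, ec_stdMono, if_pos rfl,
          hsf1 _ (encP x i) (encP_not_std x i)]
        simp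
      have hnonstd : ¬ (leadPos d (g i) / d < x (seatF d (leadPos d (g i)))) := by
        have hmem : LTerm d (g i) ∈ B x := by
          rw [← hLT, LTsub]
          exact Submodule.subset_span ⟨g i, hgM i, hgne, rfl⟩
        rw [mem_B_iff] at hmem
        intro hstd'
        have := hmem _ hstd'
        rw [ec_LTerm, if_pos rfl] at this
        exact (leadPos_spec hgne).1 this
      have hecp : ec (g i) p ≠ 0 := by
        rw [hg]
        simp only
        rw [ec_sub, ec_stdMono, if_neg hpne, zero_sub]
        simpa using hne
      have hle : leadPos d (g i) ≤ p := Nat.sInf_le hecp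
      have hltE : leadPos d (g i) < encP x i := by omega
      have hlne : leadPos d (g i) ≠ encP x i := by omega
      have hecl : ec (g i) (leadPos d (g i)) ≠ 0 := (leadPos_spec hgne).1
      rw [hg] at hecl
      simp only at hecl
      rw [ec_sub, ec_stdMono, if_neg hlne, zero_sub] at hecl
      have : ec (sf (stdMono d (x i) i)) (leadPos d (g i)) ≠ 0 := by simpa using hecl
      -- so leadPos is standard, contradiction
      apply hnonstd
      by_contra hc
      exact this (hsf1 _ _ hc)
    · omega
  set c : ∀ i : Fin d, {p // p ∈ SPF x i} → Fq :=
    fun i pp => - ec (sf (stdMono d (x i) i)) (pp : ℕ) with hc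
  have hgvec : ∀ i, gvec x c i = g i := by
    intro i
    apply ec_ext
    intro q
    rw [ec_gvec]
    rw [hg]
    simp only
    rw [ec_sub, ec_stdMono]
    by_cases hq : q ∈ SPF x i
    · rw [dif_pos hq, hc]
      simp only
      ring
    · rw [dif_neg hq]
      have : ec (sf (stdMono d (x i) i)) q = 0 := by
        by_contra hne
        exact hq (hsupp i q hne)
      rw [this, add_zero, sub_zero]
  refine ⟨c, le_antisymm ?_ ?_⟩
  · rw [Mc, Submodule.span_le]
    rintro y ⟨i, rfl⟩
    rw [hgvec i]
    exact hgM i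
  · intro f hf
    obtain ⟨s, hS, hMc⟩ := decompose x (LTsub_Mc x c) (finQuot x c) f
    have hsM : s ∈ M := by
      have h1 : f - s ∈ M := by
        have hle : Mc x c ≤ M := by
          rw [Mc, Submodule.span_le]
          rintro y ⟨i, rfl⟩
          rw [hgvec i]
          exact hgM i
        exact hle hMc
      have : s = f - (f - s) := by ring
      rw [this]
      exact Submodule.sub_mem _ hf h1
    have hs0 : s = 0 := eq_zero_of_SSup_mem x hLT hsM hS
    rw [hs0, sub_zero] at hMc
    exact hMc

end SpiralAux
namespace SpiralAux

open Spiral PowerSeries Submodule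

set_option linter.unusedSectionVars false
set_option maxHeartbeats 1600000
variable {Fq : Type*} [Field Fq] {d : ℕ} [NeZero d]
variable (x : Fin d → ℕ)

lemma enc_lt_iff {m1 m2 : ℕ} {i j : Fin d} :
    m1 * d + (i : ℕ) < m2 * d + (j : ℕ) ↔ m1 < m2 ∨ (m1 = m2 ∧ (i : ℕ) < (j : ℕ)) := by
  have hi := i.isLt
  have hj := j.isLt
  constructor
  · intro h
    rcases lt_trichotomy m1 m2 with h1 | h1 | h1
    · exact Or.inl h1
    · subst h1
      exact Or.inr ⟨rfl, by omega⟩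
    · exfalso
      have : (m2 + 1) * d ≤ m1 * d := Nat.mul_le_mul_right d (by omega)
      have h2 : (m2 + 1) * d = m2 * d + d := by ring
      omega
  · rintro (h1 | ⟨rfl, h1⟩)
    · have : (m1 + 1) * d ≤ m2 * d := Nat.mul_le_mul_right d (by omega)
      have h2 : (m1 + 1) * d = m1 * d + d := by ring
      omega
    · omega

/-- lower bound for the degree in seat `j` of standard positions beyond `encP x i` -/
def lo (i j : Fin d) : ℕ := if i < j then x i else x i + 1

lemma SPF_eq_biUnion (i : Fin d) :
    SPF x i = Finset.univ.biUnion
      (fun j : Fin d => (Finset.Ico (lo x i j) (x j)).image (fun m => m * d + (j : ℕ))) := by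
  classical
  ext p
  rw [mem_SPF]
  simp only [Finset.mem_biUnion, Finset.mem_univ, true_and, Finset.mem_image,
    Finset.mem_Ico]
  constructor
  · rintro ⟨hstd, hgt⟩
    refine ⟨seatF d p, p / d, ⟨?_, hstd⟩, enc_seat_div p⟩
    rw [encP] at hgt
    rw [← enc_seat_div (d := d) p] at hgt
    rw [enc_lt_iff] at hgt
    rw [lo]
    split_ifs with hij
    · rw [Fin.lt_def] at hij
      rcases hgt with h | ⟨h, _⟩ <;> omega
    · rw [Fin.lt_def] at hij
      rcases hgt with h | ⟨h, hlt⟩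
      · omega
      · omega
  · rintro ⟨j, m, ⟨hlo, hm⟩, rfl⟩
    constructor
    · rw [enc_div m j.isLt, seatF_enc]
      exact hm
    · rw [encP, enc_lt_iff, lo] at *
      split_ifs at hlo with hij
      · rw [Fin.lt_def] at hij
        rcases Nat.lt_or_ge (x i) m with h | h
        · exact Or.inl h
        · exact Or.inr ⟨by omega, hij⟩
      · exact Or.inl (by omega)

lemma card_SPF (i : Fin d) :
    (SPF x i).card = ∑ j : Fin d, (x j - lo x i j) := by
  classical
  rw [SPF_eq_biUnion]
  rw [Finset.card_biUnion]
  · refine Finset.sum_congr rfl fun j _ => ?_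
    rw [Finset.card_image_of_injective _ (fun m m' hmm => ?_), Nat.card_Ico]
    have : m * d = m' * d := by omega
    exact Nat.eq_of_mul_eq_mul_right (NeZero.pos d) this
  · intro j _ j' _ hjj
    apply Finset.disjoint_left.mpr
    intro p hp hp'
    simp only [Finset.mem_image, Finset.mem_Ico] at hp hp'
    obtain ⟨m, _, rfl⟩ := hp
    obtain ⟨m', _, he⟩ := hp'
    apply hjj
    have h1 : (m' * d + (j' : ℕ)) % d = (j' : ℕ) := enc_mod m' j'.isLt
    have h2 : (m * d + (j : ℕ)) % d = (j : ℕ) := enc_mod m j.isLt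
    rw [he] at h1
    exact Fin.ext (by omega)

lemma sum_card_SPF : ∑ i : Fin d, (SPF x i).card = weight x := by
  classical
  rw [weight]
  have hterm : ∀ i j : Fin d, x j - lo x i j
      = (if i < j then x j - x i else 0) + (if j < i then x j - x i - 1 else 0) := by
    intro i j
    rw [lo]
    rcases lt_trichotomy i j with h | h | h
    · rw [if_pos h, if_pos h, if_neg (by intro hc; exact absurd (lt_trans h hc) (lt_irrefl i)),
        add_zero]
    · subst h
      rw [if_neg (lt_irrefl i), if_neg (lt_irrefl i), if_neg (lt_irrefl i)]
      omega
    · rw [if_neg (by intro hc; exact absurd (lt_trans h hc) (lt_irrefl j)),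
        if_neg (by intro hc; exact absurd (lt_trans h hc) (lt_irrefl j)), if_pos h, zero_add]
      omega
  calc ∑ i : Fin d, (SPF x i).card
      = ∑ i : Fin d, ∑ j : Fin d,
          ((if i < j then x j - x i else 0) + (if j < i then x j - x i - 1 else 0)) := by
        refine Finset.sum_congr rfl fun i _ => ?_
        rw [card_SPF]
        exact Finset.sum_congr rfl fun j _ => hterm i j
    _ = (∑ i : Fin d, ∑ j : Fin d, (if i < j then x j - x i else 0))
        + (∑ i : Fin d, ∑ j : Fin d, (if j < i then x j - x i - 1 else 0)) := by
        rw [← Finset.sum_add_distrib]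
        exact Finset.sum_congr rfl fun i _ => Finset.sum_add_distrib
    _ = (∑ i : Fin d, ∑ j : Fin d, (if i < j then x j - x i else 0))
        + (∑ i : Fin d, ∑ j : Fin d, (if i < j then x i - x j - 1 else 0)) := by
        congr 1
        rw [Finset.sum_comm]
    _ = ∑ i : Fin d, ∑ j : Fin d, if i < j then x j - x i + (x i - x j - 1) else 0 := by
        rw [← Finset.sum_add_distrib]
        refine Finset.sum_congr rfl fun i _ => ?_
        rw [← Finset.sum_add_distrib]
        refine Finset.sum_congr rfl fun j _ => ?_
        split_ifs <;> omega

end SpiralAux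
open Spiral in
/-- For every `x = (n₁,…,n_d) ∈ ℕ^d`, the set `Hilb(x)` of
`F_q[[T]]`-submodules `M` of `F = F_q[[T]]^d` with `dim_{F_q}(F/M)` finite and `LT(M)`
equal to the submodule generated by `T^{n₁}u₁,…,T^{n_d}u_d` is finite, of cardinality
`q^{W(x)}`. -/
theorem statement19 (d : ℕ) [NeZero d] (Fq : Type*) [Field Fq] [Fintype Fq] (q : ℕ)
    (hq : Fintype.card Fq = q) (x : Fin d → ℕ) :
    {M : Submodule (PowerSeries Fq) (Fin d → PowerSeries Fq) |
        Module.Finite Fq ((Fin d → PowerSeries Fq) ⧸ M) ∧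
        LTsub d M =
          Submodule.span (PowerSeries Fq) (Set.range fun i => stdMono d (x i) i)}.Finite ∧
    Nat.card {M : Submodule (PowerSeries Fq) (Fin d → PowerSeries Fq) //
        Module.Finite Fq ((Fin d → PowerSeries Fq) ⧸ M) ∧
        LTsub d M =
          Submodule.span (PowerSeries Fq) (Set.range fun i => stdMono d (x i) i)} =
      q ^ weight x := by
  classical
  have e : (∀ i : Fin d, {p // p ∈ SpiralAux.SPF x i} → Fq) ≃
      {M : Submodule (PowerSeries Fq) (Fin d → PowerSeries Fq) //
        Module.Finite Fq ((Fin d → PowerSeries Fq) ⧸ M) ∧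
        LTsub d M =
          Submodule.span (PowerSeries Fq) (Set.range fun i => stdMono d (x i) i)} := by
    refine Equiv.ofBijective
      (fun c => ⟨SpiralAux.Mc x c, SpiralAux.finQuot x c, SpiralAux.LTsub_Mc x c⟩) ⟨?_, ?_⟩
    · intro c c' h
      exact SpiralAux.Mc_inj x (Subtype.mk_eq_mk.mp h)
    · rintro ⟨M, hfin, hlt⟩
      obtain ⟨c, hc⟩ := SpiralAux.Mc_surj x hfin hlt
      exact ⟨c, Subtype.ext hc⟩
  constructor
  · have hfin : Finite {M : Submodule (PowerSeries Fq) (Fin d → PowerSeries Fq) //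
        Module.Finite Fq ((Fin d → PowerSeries Fq) ⧸ M) ∧
        LTsub d M =
          Submodule.span (PowerSeries Fq) (Set.range fun i => stdMono d (x i) i)} :=
      Finite.of_equiv _ e
    exact Set.finite_coe_iff.mp hfin
  · rw [← Nat.card_congr e, Nat.card_eq_fintype_card, Fintype.card_pi]
    have hcardi : ∀ i : Fin d, Fintype.card ({p // p ∈ SpiralAux.SPF x i} → Fq)
        = q ^ (SpiralAux.SPF x i).card := by
      intro i
      rw [Fintype.card_fun, hq, Fintype.card_coe]
    rw [Finset.prod_congr rfl (fun i _ => hcardi i), Finset.prod_pow_eq_pow_sum,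
      SpiralAux.sum_card_SPF]
end
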